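/- arXiv:1403.2511 — 2 statements merged into one kernel-verified Lean document; each statement's English description precedes it below -/
import Mathlib

section
/- The function Z₁(t) = 2 + t·w'(t), where w'(t) = √2 (1 - e^{√2 t})/(1 + e^{√2 t}), satisfies the linearized equation Z₁'' + e^{w} Z₁ = 0 on ℝ. -/
noncomputable def Z₁ (t : ℝ) : ℝ :=
  2 + t * (Real.sqrt 2 * (1 - Real.exp (Real.sqrt 2 * t)) / (1 + Real.exp (Real.sqrt 2 * t)))

noncomputable def Z₁d (t : ℝ) : ℝ :=
  Real.sqrt 2 * (1 - Real.exp (Real.sqrt 2 * t)) / (1 + Real.exp (Real.sqrt 2 * t))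
    - 4 * t * Real.exp (Real.sqrt 2 * t) / (1 + Real.exp (Real.sqrt 2 * t)) ^ 2

noncomputable def Z₁dd (t : ℝ) : ℝ :=
  -8 * Real.exp (Real.sqrt 2 * t) / (1 + Real.exp (Real.sqrt 2 * t)) ^ 2
    - 4 * Real.sqrt 2 * t * Real.exp (Real.sqrt 2 * t) * (1 - Real.exp (Real.sqrt 2 * t))
        / (1 + Real.exp (Real.sqrt 2 * t)) ^ 3

lemma hpos (t : ℝ) : (0:ℝ) < 1 + Real.exp (Real.sqrt 2 * t) := by positivity

lemma hne (t : ℝ) : (1 + Real.exp (Real.sqrt 2 * t)) ≠ 0 := (hpos t).ne'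

lemma hE (t : ℝ) : HasDerivAt (fun t : ℝ => Real.exp (Real.sqrt 2 * t))
    (Real.sqrt 2 * Real.exp (Real.sqrt 2 * t)) t := by
  simpa [mul_comm] using ((hasDerivAt_id t).const_mul (Real.sqrt 2)).exp

lemma hsq : Real.sqrt 2 ^ 2 = 2 := Real.sq_sqrt (by norm_num)

lemma hd1 (t : ℝ) : HasDerivAt Z₁ (Z₁d t) t := by
  have h := ((((hE t).const_sub 1).const_mul (Real.sqrt 2)).div ((hE t).const_add 1)
      (hne t))
  have h2 := ((hasDerivAt_id t).mul h).const_add 2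
  convert h2 using 1
  · rfl
  · rfl
  · rfl
  unfold Z₁d
  simp only [Pi.div_apply, Pi.mul_apply, Pi.pow_apply, id]
  have := hne t
  field_simp
  ring_nf
  rw [hsq]
  ring

lemma hd2 (t : ℝ) : HasDerivAt Z₁d (Z₁dd t) t := by
  have hA := (((hE t).const_sub 1).const_mul (Real.sqrt 2)).div ((hE t).const_add 1)
      (hne t)
  have hB := ((((hasDerivAt_id t).const_mul 4).mul (hE t)).div
      (((hE t).const_add 1).pow 2) (pow_ne_zero 2 (hne t)))
  have h := hA.sub hB
  convert h using 1
  · rfl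
  · rfl
  · rfl
  unfold Z₁dd
  simp only [Pi.div_apply, Pi.mul_apply, Pi.pow_apply, id]
  have := hne t
  field_simp
  ring_nf
  rw [hsq]
  ring

theorem stmt_5 :
    Differentiable ℝ Z₁ ∧ Differentiable ℝ (deriv Z₁) ∧
      ∀ t : ℝ, deriv (deriv Z₁) t +
        (4 * Real.exp (Real.sqrt 2 * t) / (1 + Real.exp (Real.sqrt 2 * t)) ^ 2) * Z₁ t = 0 := by
  have e1 : deriv Z₁ = Z₁d := funext fun t => (hd1 t).deriv
  have e2 : deriv Z₁d = Z₁dd := funext fun t => (hd2 t).deriv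
  refine ⟨fun t => (hd1 t).differentiableAt, ?_, ?_⟩
  · rw [e1]; exact fun t => (hd2 t).differentiableAt
  · intro t
    rw [e1, e2]
    unfold Z₁dd Z₁
    have := hne t
    field_simp
    ring
end

section
/- Simplified gap condition: for Λ > 0, there exist c > 0 and a sequence ε_k → 0⁺ such that |4π² m² ε_k² - Λ| ≥ c ε_k for every natural number m and every k. -/
open Filter Topology

theorem stmt_13 (Λ : ℝ) (hΛ : 0 < Λ) :
    ∃ c > (0 : ℝ), ∃ E : ℕ → ℝ,
      (∀ k, 0 < E k) ∧ Tendsto E atTop (𝓝 0) ∧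
      ∀ k, ∀ m : ℕ, c * E k ≤ |4 * Real.pi ^ 2 * (m : ℝ) ^ 2 * (E k) ^ 2 - Λ| := by
  have hπ := Real.pi_pos
  have hs : 0 < Real.sqrt Λ := Real.sqrt_pos.mpr hΛ
  have hsq : Real.sqrt Λ ^ 2 = Λ := Real.sq_sqrt hΛ.le
  refine ⟨Real.pi * Real.sqrt Λ, by positivity,
    fun k => Real.sqrt Λ / (2 * Real.pi * ((k : ℝ) + 1/2)),
    fun k => by positivity, ?_, ?_⟩
  · have hden : Tendsto (fun k : ℕ => 2 * Real.pi * ((k : ℝ) + 1/2)) atTop atTop := by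
      apply Tendsto.const_mul_atTop (by positivity : (0:ℝ) < 2 * Real.pi)
      exact tendsto_atTop_add_const_right _ _ tendsto_natCast_atTop_atTop
    exact Tendsto.div_atTop tendsto_const_nhds hden
  · intro k m
    beta_reduce
    set N : ℝ := (k : ℝ) + 1/2 with hN
    have hN0 : 0 < N := by rw [hN]; positivity
    clear_value N
    have hε : (4 : ℝ) * Real.pi ^ 2 * (m : ℝ) ^ 2 *
        (Real.sqrt Λ / (2 * Real.pi * N)) ^ 2 - Λ = Λ * ((m : ℝ) ^ 2 - N ^ 2) / N ^ 2 := by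
      field_simp
      nlinarith [hsq, sq_nonneg N, sq_nonneg (Real.pi * N)]
    rw [hε]
    have key : N / 2 ≤ |(m : ℝ) ^ 2 - N ^ 2| := by
      rcases le_or_gt m k with h | h
      · have hm : (m : ℝ) ≤ (k : ℝ) := Nat.cast_le.mpr h
        have hmN : (m : ℝ) ≤ N := by rw [hN]; linarith
        have hfac : (0:ℝ) ≤ (N - (m:ℝ)) * (N + (m:ℝ)) := mul_nonneg (by linarith) (by positivity)
        rw [abs_of_nonpos (by nlinarith [hfac])]
        nlinarith [(Nat.cast_nonneg m : (0:ℝ) ≤ (m:ℝ))]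
      · have hm : ((k + 1 : ℕ) : ℝ) ≤ (m : ℝ) := Nat.cast_le.mpr h
        push_cast at hm
        have hmN : N ≤ (m : ℝ) := by rw [hN]; linarith
        have hfac : (0:ℝ) ≤ ((m:ℝ) - N) * ((m:ℝ) + N) := mul_nonneg (by linarith) (by positivity)
        rw [abs_of_nonneg (by nlinarith [hfac])]
        nlinarith
    have habs : |Λ * ((m : ℝ) ^ 2 - N ^ 2) / N ^ 2| =
        Λ * |(m : ℝ) ^ 2 - N ^ 2| / N ^ 2 := by
      rw [abs_div, abs_mul, abs_of_pos hΛ, abs_of_pos (by positivity : (0:ℝ) < N ^ 2)]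
    rw [habs]
    have lhs_eq : Real.pi * Real.sqrt Λ * (Real.sqrt Λ / (2 * Real.pi * N)) = Λ / (2 * N) := by
      field_simp
      linear_combination hsq
    show Real.pi * Real.sqrt Λ * (Real.sqrt Λ / (2 * Real.pi * N)) ≤ _
    rw [lhs_eq, div_le_div_iff₀ (by positivity) (by positivity : (0:ℝ) < N ^ 2)]
    have h1 : Λ * (N / 2) * (2 * N) ≤ Λ * |(m : ℝ) ^ 2 - N ^ 2| * (2 * N) :=
      mul_le_mul_of_nonneg_right (mul_le_mul_of_nonneg_left key hΛ.le)
        (by positivity : (0:ℝ) ≤ 2 * N)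
    have h2 : Λ * (N / 2) * (2 * N) = Λ * N ^ 2 := by ring
    linarith [h1, h2]
end
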